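/- Let p > 1 and let s be a real number with s > 1. Set r = s − 1, q = (p+1)s/2 − 1 (so that 2q = (p+1)r + p − 1 and q + 1 = (p+1)(r+1)/2), a₁ = 4q√p/(q+1)², and a₂ = 4r√p/(r+1)². Then a₁·a₂ > 1 if and only if L(s) < 0, where L(s) = s⁴ − (32p/(p+1))s² + (32p(p+3)/(p+1)²)s − 64p/(p+1)². -/
import Mathlib


/-- The quartic polynomial `L`. -/
noncomputable def Lpoly (p s : ℝ) : ℝ :=
  s ^ 4 - 32 * p / (p + 1) * s ^ 2 + 32 * p * (p + 3) / (p + 1) ^ 2 * s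
    - 64 * p / (p + 1) ^ 2

/-- `t₀ = √(2p/(p+1)) + √(2p/(p+1) − √(2p/(p+1)))`. -/
noncomputable def t0 (p : ℝ) : ℝ :=
  Real.sqrt (2 * p / (p + 1)) +
    Real.sqrt (2 * p / (p + 1) - Real.sqrt (2 * p / (p + 1)))

/-- The quartic polynomial `H` from Theorem 1.1. -/
noncomputable def Hpoly (p x : ℝ) : ℝ :=
  x ^ 4 - 32 * p * (p + 1) / (p - 1) ^ 2 * x ^ 2
    + 32 * p * (p + 1) * (p + 3) / (p - 1) ^ 3 * x
    - 64 * p * (p + 1) ^ 2 / (p - 1) ^ 4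
/-- With `r = s − 1`, `q = (p+1)s/2 − 1`, `a₁ = 4q√p/(q+1)²` and `a₂ = 4r√p/(r+1)²`,
one has `a₁a₂ > 1` if and only if `L(s) < 0`. -/
theorem a1a2_gt_one_iff (p : ℝ) (hp : 1 < p) (s : ℝ) (hs : 1 < s)
    (r q a₁ a₂ : ℝ) (hr : r = s - 1) (hq : q = (p + 1) * s / 2 - 1)
    (ha₁ : a₁ = 4 * q * Real.sqrt p / (q + 1) ^ 2)
    (ha₂ : a₂ = 4 * r * Real.sqrt p / (r + 1) ^ 2) :
    1 < a₁ * a₂ ↔ Lpoly p s < 0 := by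
  have hps : Real.sqrt p * Real.sqrt p = p := Real.mul_self_sqrt (by linarith)
  have hq1 : 0 < q + 1 := by rw [hq]; nlinarith
  have hr1 : 0 < r + 1 := by rw [hr]; linarith
  have hden : (0:ℝ) < (q + 1) ^ 2 * (r + 1) ^ 2 :=
    mul_pos (pow_pos hq1 2) (pow_pos hr1 2)
  have hne : p + 1 ≠ 0 := by positivity
  rw [ha₁, ha₂, div_mul_div_comm, one_lt_div hden]
  have hA : 4 * q * Real.sqrt p * (4 * r * Real.sqrt p) = 16 * p * q * r := by
    linear_combination 16 * q * r * hps
  rw [hA, ← sub_pos]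
  have hL : 16 * p * q * r - (q + 1) ^ 2 * (r + 1) ^ 2
      = -((p + 1) ^ 2 * Lpoly p s) / 4 := by
    rw [Lpoly, hr, hq]
    field_simp
    ring
  rw [hL]
  have hpp : (0:ℝ) < (p + 1) ^ 2 := by positivity
  constructor <;> intro h <;> nlinarith
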